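/- Let ω(k) = 1 − cos(2πk), let f : ℝ → ℝ be 1-periodic with f(k) = −f(1/2 − k) for all k, and let a, b ∈ ℝ satisfy f(k) − a > 0 and f(k) − b > 0 for all k. Define λ(k) = 1/(exp(f(k) − a) − 1) and μ(k) = 1/(exp(f(k) − b) − 1). Then for all k₁, k₂, k₃, k₄ ∈ ℝ with k₁ − k₂ + k₃ − k₄ ∈ ℤ and ω(k₁) − ω(k₂) + ω(k₃) − ω(k₄) = 0, one has (1+λ(k₁))·λ(k₂)·(1+μ(k₃))·μ(k₄) = λ(k₁)·(1+λ(k₂))·μ(k₃)·(1+μ(k₄)). -/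

import Mathlib

lemma alg_aux (E1 E2 E3 E4 : ℝ) (h1 : E1 - 1 ≠ 0) (h2 : E2 - 1 ≠ 0)
    (h3 : E3 - 1 ≠ 0) (h4 : E4 - 1 ≠ 0) (hE : E1 * E3 = E2 * E4) :
    (1 + 1/(E1-1)) * (1/(E2-1)) * (1 + 1/(E3-1)) * (1/(E4-1))
      = (1/(E1-1)) * (1 + 1/(E2-1)) * (1/(E3-1)) * (1 + 1/(E4-1)) := by
  field_simp
  linear_combination hE

lemma periodZ (f : ℝ → ℝ) (hper : ∀ k, f (k + 1) = f k) :
    ∀ (m : ℤ) (x : ℝ), f (x + m) = f x := by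
  intro m
  induction m using Int.induction_on with
  | zero => simp
  | succ i ih =>
    intro x
    rw [show x + (((i : ℤ) + 1 : ℤ) : ℝ) = (x + ((i : ℤ) : ℝ)) + 1 by push_cast; ring,
      hper, ih]
  | pred i ih =>
    intro x
    have h := hper (x + ((-(i : ℤ) - 1 : ℤ) : ℝ))
    rw [show x + ((-(i : ℤ) - 1 : ℤ) : ℝ) + 1 = x + ((-(i : ℤ) : ℤ) : ℝ) by push_cast; ring,
      ih] at h
    exact h.symm

theorem nonthermal_detailed_balance (f : ℝ → ℝ)
    (hper : ∀ k, f (k + 1) = f k)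
    (hrefl : ∀ k, f k = -f (1/2 - k))
    (a b : ℝ)
    (ha : ∀ k, 0 < f k - a) (hb : ∀ k, 0 < f k - b)
    (lam : ℝ → ℝ) (mu : ℝ → ℝ)
    (hlam : ∀ k, lam k = 1 / (Real.exp (f k - a) - 1))
    (hmu : ∀ k, mu k = 1 / (Real.exp (f k - b) - 1)) :
    ∀ k₁ k₂ k₃ k₄ : ℝ, (∃ n : ℤ, k₁ - k₂ + k₃ - k₄ = n) →
      (1 - Real.cos (2 * Real.pi * k₁)) - (1 - Real.cos (2 * Real.pi * k₂))
        + (1 - Real.cos (2 * Real.pi * k₃)) - (1 - Real.cos (2 * Real.pi * k₄)) = 0 →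
      (1 + lam k₁) * lam k₂ * (1 + mu k₃) * mu k₄
        = lam k₁ * (1 + lam k₂) * mu k₃ * (1 + mu k₄) := by
  intro k₁ k₂ k₃ k₄ hmom hen
  obtain ⟨n, hn⟩ := hmom
  set π := Real.pi with hπdef
  have fp := periodZ f hper
  -- key sum identity
  have key : f k₁ + f k₃ = f k₂ + f k₄ := by
    have h13 := Real.cos_add_cos (2*π*k₁) (2*π*k₃)
    have h24 := Real.cos_add_cos (2*π*k₂) (2*π*k₄)
    rw [show (2*π*k₁ + 2*π*k₃)/2 = π*(k₁+k₃) by ring,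
        show (2*π*k₁ - 2*π*k₃)/2 = π*(k₁-k₃) by ring] at h13
    rw [show (2*π*k₂ + 2*π*k₄)/2 = π*(k₂+k₄) by ring,
        show (2*π*k₂ - 2*π*k₄)/2 = π*(k₂-k₄) by ring] at h24
    have hsum : Real.cos (π*(k₁+k₃)) * Real.cos (π*(k₁-k₃))
        = Real.cos (π*(k₂+k₄)) * Real.cos (π*(k₂-k₄)) := by
      nlinarith [hen, h13, h24]
    have hshift : Real.cos (π*(k₁+k₃)) = (-1:ℝ)^n * Real.cos (π*(k₂+k₄)) := by
      rw [show π*(k₁+k₃) = π*(k₂+k₄) + (n:ℝ) * π by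
        have hk : k₁ + k₃ = k₂ + k₄ + (n:ℝ) := by linarith
        rw [hk]; ring]
      exact Real.cos_add_int_mul_pi _ n
    by_cases hC : Real.cos (π*(k₂+k₄)) = 0
    · -- both pair sums are half-integers
      have hA : Real.cos (π*(k₁+k₃)) = 0 := by rw [hshift, hC, mul_zero]
      obtain ⟨m, hm⟩ := Real.cos_eq_zero_iff.mp hC
      obtain ⟨m', hm'⟩ := Real.cos_eq_zero_iff.mp hA
      have hk24 : k₂ + k₄ = 1/2 + (m : ℝ) := by
        have h' : π * (k₂+k₄) = π * (1/2 + (m:ℝ)) := by rw [hm]; ring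
        have := mul_left_cancel₀ Real.pi_ne_zero h'
        linarith
      have hk13 : k₁ + k₃ = 1/2 + (m' : ℝ) := by
        have h' : π * (k₁+k₃) = π * (1/2 + (m':ℝ)) := by rw [hm']; ring
        have := mul_left_cancel₀ Real.pi_ne_zero h'
        linarith
      have h4 : f k₄ = - f k₂ := by
        rw [show k₄ = (1/2 - k₂) + (m:ℝ) by linarith, fp m]
        linarith [hrefl k₂]
      have h3 : f k₃ = - f k₁ := by
        rw [show k₃ = (1/2 - k₁) + (m':ℝ) by linarith, fp m']
        linarith [hrefl k₁]
      linarith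
    · -- cancel the common cosine factor
      have hsq : ((-1:ℝ))^n * ((-1:ℝ))^n = 1 := by
        rw [← zpow_add₀ (by norm_num : (-1:ℝ) ≠ 0)]
        exact Even.neg_one_zpow ⟨n, rfl⟩
      have h1 : ((-1:ℝ))^n * Real.cos (π*(k₂+k₄)) * Real.cos (π*(k₁-k₃))
          = Real.cos (π*(k₂+k₄)) * Real.cos (π*(k₂-k₄)) := by
        rw [← hshift]; exact hsum
      have h2 : Real.cos (π*(k₂+k₄)) * Real.cos (π*(k₁-k₃))
          = Real.cos (π*(k₂+k₄)) * (((-1:ℝ))^n * Real.cos (π*(k₂-k₄))) := by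
        linear_combination ((-1:ℝ))^n * h1
          - Real.cos (π*(k₂+k₄)) * Real.cos (π*(k₁-k₃)) * hsq
      have hB' : Real.cos (π*(k₁-k₃)) = ((-1:ℝ))^n * Real.cos (π*(k₂-k₄)) :=
        mul_left_cancel₀ hC h2
      have hexp : Real.cos (π*(k₂-k₄) + (n:ℝ)*π) = (-1:ℝ)^n * Real.cos (π*(k₂-k₄)) :=
        Real.cos_add_int_mul_pi _ n
      have hB : Real.cos (π*(k₁-k₃)) = Real.cos (π*(k₂-k₄) + (n:ℝ)*π) := by
        rw [hexp]; exact hB'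
      obtain ⟨m, hm | hm⟩ := Real.cos_eq_cos_iff.mp hB
      · -- π(k₂-k₄) + nπ = 2mπ + π(k₁-k₃)
        have hd : k₂ - k₄ + (n:ℝ) = 2*(m:ℝ) + (k₁ - k₃) := by
          have h' : π * (k₂ - k₄ + (n:ℝ)) = π * (2*(m:ℝ) + (k₁ - k₃)) := by
            linear_combination hm
          have := mul_left_cancel₀ Real.pi_ne_zero h'
          linarith
        have e1 : f k₁ = f k₂ := by
          rw [show k₁ = k₂ + ((n - m : ℤ) : ℝ) by push_cast; linarith, fp]
        have e3 : f k₃ = f k₄ := by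
          rw [show k₃ = k₄ + ((m : ℤ) : ℝ) by push_cast; linarith, fp]
        linarith
      · -- π(k₂-k₄) + nπ = 2mπ - π(k₁-k₃)
        have hd : k₂ - k₄ + (n:ℝ) = 2*(m:ℝ) - (k₁ - k₃) := by
          have h' : π * (k₂ - k₄ + (n:ℝ)) = π * (2*(m:ℝ) - (k₁ - k₃)) := by
            linear_combination hm
          have := mul_left_cancel₀ Real.pi_ne_zero h'
          linarith
        have e1 : f k₁ = f k₄ := by
          rw [show k₁ = k₄ + ((m : ℤ) : ℝ) by push_cast; linarith, fp]
        have e3 : f k₃ = f k₂ := by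
          rw [show k₃ = k₂ + ((n - m : ℤ) : ℝ) by push_cast; linarith, fp]
        linarith
  -- algebraic detailed balance
  have g1 : (1:ℝ) < Real.exp (f k₁ - a) := Real.one_lt_exp_iff.mpr (ha k₁)
  have g2 : (1:ℝ) < Real.exp (f k₂ - a) := Real.one_lt_exp_iff.mpr (ha k₂)
  have g3 : (1:ℝ) < Real.exp (f k₃ - b) := Real.one_lt_exp_iff.mpr (hb k₃)
  have g4 : (1:ℝ) < Real.exp (f k₄ - b) := Real.one_lt_exp_iff.mpr (hb k₄)
  have hE : Real.exp (f k₁ - a) * Real.exp (f k₃ - b)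
      = Real.exp (f k₂ - a) * Real.exp (f k₄ - b) := by
    rw [← Real.exp_add, ← Real.exp_add]
    congr 1
    linarith
  rw [hlam k₁, hlam k₂, hmu k₃, hmu k₄]
  exact alg_aux _ _ _ _ (by linarith) (by linarith) (by linarith) (by linarith) hE
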